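/- Fix real matrices A ∈ ℝ^{n×n}, B₂ ∈ ℝ^{n×m}, C₂ ∈ ℝ^{p×n}. Let Λ ∈ ℝ^{(m+n)×(p+n)} be arbitrary, let Ξ be an invertible n×n real matrix, and let X, Y be n×n real symmetric matrices with [X, I; I, Y] ≻ 0. Then Φ_Λ(Ψ_K(Λ,X,Y,Ξ), Ψ_P(X,Y,Ξ)) = Λ. -/

import Mathlib

open Matrix

noncomputable section

/-- The mapping `Φ_M(K,P)` arising in output feedback ECL constructions. -/
def PhiM {n m p : ℕ} (A : Matrix (Fin n) (Fin n) ℝ) (B₂ : Matrix (Fin n) (Fin m) ℝ)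
    (C₂ : Matrix (Fin p) (Fin n) ℝ)
    (K : Matrix (Fin m ⊕ Fin n) (Fin p ⊕ Fin n) ℝ)
    (P : Matrix (Fin n ⊕ Fin n) (Fin n ⊕ Fin n) ℝ) : Matrix (Fin n) (Fin n) ℝ :=
  P.toBlocks₁₂ * K.toBlocks₂₁ * C₂ * (P⁻¹).toBlocks₁₁
    + P.toBlocks₁₁ * B₂ * K.toBlocks₁₂ * (P⁻¹).toBlocks₂₁
    + P.toBlocks₁₂ * K.toBlocks₂₂ * (P⁻¹).toBlocks₂₁
    + P.toBlocks₁₁ * (A + B₂ * K.toBlocks₁₁ * C₂) * (P⁻¹).toBlocks₁₁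

/-- The mapping `Φ_Λ(K,P)` arising in output feedback ECL constructions. -/
def PhiLam {n m p : ℕ} (A : Matrix (Fin n) (Fin n) ℝ) (B₂ : Matrix (Fin n) (Fin m) ℝ)
    (C₂ : Matrix (Fin p) (Fin n) ℝ)
    (K : Matrix (Fin m ⊕ Fin n) (Fin p ⊕ Fin n) ℝ)
    (P : Matrix (Fin n ⊕ Fin n) (Fin n ⊕ Fin n) ℝ) :
    Matrix (Fin m ⊕ Fin n) (Fin p ⊕ Fin n) ℝ :=
  Matrix.fromBlocks K.toBlocks₁₁
    (K.toBlocks₁₁ * C₂ * (P⁻¹).toBlocks₁₁ + K.toBlocks₁₂ * (P⁻¹).toBlocks₂₁)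
    (P.toBlocks₁₁ * B₂ * K.toBlocks₁₁ + P.toBlocks₁₂ * K.toBlocks₂₁)
    (PhiM A B₂ C₂ K P)

/-- The mapping `Ψ_K(Λ,X,Y,Ξ)` arising in output feedback ECL constructions. -/
def PsiK {n m p : ℕ} (A : Matrix (Fin n) (Fin n) ℝ) (B₂ : Matrix (Fin n) (Fin m) ℝ)
    (C₂ : Matrix (Fin p) (Fin n) ℝ)
    (Λ : Matrix (Fin m ⊕ Fin n) (Fin p ⊕ Fin n) ℝ)
    (X Y Ξ : Matrix (Fin n) (Fin n) ℝ) :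
    Matrix (Fin m ⊕ Fin n) (Fin p ⊕ Fin n) ℝ :=
  (Matrix.fromBlocks (1 : Matrix (Fin m) (Fin m) ℝ) 0 (Y * B₂) Ξ)⁻¹
    * (Λ - Matrix.fromBlocks 0 0 0 (Y * A * X))
    * (Matrix.fromBlocks (1 : Matrix (Fin p) (Fin p) ℝ) (C₂ * X) 0
        (-(Ξ⁻¹ * (Y - X⁻¹) * X)))⁻¹

/-- The mapping `Ψ_P(X,Y,Ξ)` arising in output feedback ECL constructions. -/
def PsiP {n : ℕ} (X Y Ξ : Matrix (Fin n) (Fin n) ℝ) :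
    Matrix (Fin n ⊕ Fin n) (Fin n ⊕ Fin n) ℝ :=
  Matrix.fromBlocks Y Ξ Ξᵀ (Ξᵀ * (Y - X⁻¹)⁻¹ * Ξ)

/-- **Lemma D.2**: for any `Λ`, invertible `Ξ`, and symmetric `X, Y` with
`[X, I; I, Y] ≻ 0`, we have `Φ_Λ(Ψ_K(Λ,X,Y,Ξ), Ψ_P(X,Y,Ξ)) = Λ`. -/
theorem phiLam_psiK_psiP {n m p : ℕ}
    (A : Matrix (Fin n) (Fin n) ℝ) (B₂ : Matrix (Fin n) (Fin m) ℝ)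
    (C₂ : Matrix (Fin p) (Fin n) ℝ)
    (Λ : Matrix (Fin m ⊕ Fin n) (Fin p ⊕ Fin n) ℝ)
    {X Y Ξ : Matrix (Fin n) (Fin n) ℝ}
    (hX : X.IsSymm) (hY : Y.IsSymm) (hΞ : IsUnit Ξ)
    (hXY : (Matrix.fromBlocks X (1 : Matrix (Fin n) (Fin n) ℝ)
      (1 : Matrix (Fin n) (Fin n) ℝ) Y).PosDef) :
    PhiLam A B₂ C₂ (PsiK A B₂ C₂ Λ X Y Ξ) (PsiP X Y Ξ) = Λ := by
  -- positivity and invertibility facts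
  have hXh : X.IsHermitian := by
    rw [Matrix.IsHermitian, conjTranspose_eq_transpose_of_trivial]; exact hX
  have hYh : Y.IsHermitian := by
    rw [Matrix.IsHermitian, conjTranspose_eq_transpose_of_trivial]; exact hY
  have hXpd : X.PosDef := by
    refine Matrix.PosDef.of_dotProduct_mulVec_pos hXh fun x hx => ?_
    have hne : (Sum.elim x (0 : Fin n → ℝ)) ≠ 0 := by
      intro h; exact hx (funext fun i => congrFun h (Sum.inl i))
    have := hXY.dotProduct_mulVec_pos hne
    simpa [Matrix.fromBlocks_mulVec, sumElim_dotProduct_sumElim,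
      Function.star_sumElim] using this
  haveI : Invertible X := hXpd.isUnit.invertible
  have hSpd : (Y - X⁻¹).PosDef := by
    refine Matrix.PosDef.of_dotProduct_mulVec_pos (hYh.sub hXh.inv) fun y hy => ?_
    have hne : (Sum.elim (-((X⁻¹ * 1) *ᵥ y)) y) ≠ 0 := by
      intro h; exact hy (funext fun i => congrFun h (Sum.inr i))
    have hXY' : (Matrix.fromBlocks X 1 ((1 : Matrix (Fin n) (Fin n) ℝ))ᴴ Y).PosDef := by
      simpa using hXY
    have h3 := hXY'.dotProduct_mulVec_pos hne
    rw [dotProduct_mulVec, schur_complement_eq₁₁ _ _ _ _ hXh, neg_add_cancel] at h3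
    simpa [Matrix.dotProduct_mulVec] using h3
  have hXd : IsUnit X.det := X.isUnit_iff_isUnit_det.mp hXpd.isUnit
  have hΞd : IsUnit Ξ.det := Ξ.isUnit_iff_isUnit_det.mp hΞ
  have hSd : IsUnit (Y - X⁻¹).det := (Y - X⁻¹).isUnit_iff_isUnit_det.mp hSpd.isUnit
  have hΞtd : IsUnit Ξᵀ.det := by rwa [Matrix.det_transpose]
  -- the inverse of `PsiP X Y Ξ`
  have hPinv : (PsiP X Y Ξ)⁻¹ = Matrix.fromBlocks X (-(X * (Y - X⁻¹) * Ξᵀ⁻¹))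
      (-(Ξ⁻¹ * (Y - X⁻¹) * X)) (Ξ⁻¹ * Y * X * (Y - X⁻¹) * Ξᵀ⁻¹) := by
    apply Matrix.inv_eq_right_inv
    rw [PsiP, Matrix.fromBlocks_multiply, ← Matrix.fromBlocks_one, Matrix.fromBlocks_inj]
    set S := Y - X⁻¹ with hS
    refine ⟨?_, ?_, ?_, ?_⟩
    · rw [Matrix.mul_neg, Matrix.mul_assoc Ξ⁻¹, Matrix.mul_nonsing_inv_cancel_left _ _ hΞd,
        hS, Matrix.sub_mul, Matrix.nonsing_inv_mul _ hXd]
      noncomm_ring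
    · rw [show Ξ * (Ξ⁻¹ * Y * X * S * Ξᵀ⁻¹) = Ξ * (Ξ⁻¹ * (Y * X * S * Ξᵀ⁻¹)) by
        simp only [Matrix.mul_assoc], Matrix.mul_nonsing_inv_cancel_left _ _ hΞd]
      simp only [Matrix.mul_neg, ← Matrix.mul_assoc]
      noncomm_ring
    · rw [Matrix.mul_neg, Matrix.mul_assoc (Ξᵀ * S⁻¹), Matrix.mul_assoc Ξ⁻¹,
        Matrix.mul_nonsing_inv_cancel_left _ _ hΞd, ← Matrix.mul_assoc,
        Matrix.mul_assoc Ξᵀ, Matrix.nonsing_inv_mul _ hSd]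
      simp
    · rw [show Ξᵀ * S⁻¹ * Ξ * (Ξ⁻¹ * Y * X * S * Ξᵀ⁻¹) =
          Ξᵀ * S⁻¹ * (Ξ * (Ξ⁻¹ * (Y * X * S * Ξᵀ⁻¹))) by simp only [Matrix.mul_assoc],
        Matrix.mul_nonsing_inv_cancel_left _ _ hΞd,
        show Ξᵀ * S⁻¹ * (Y * X * S * Ξᵀ⁻¹) =
          Ξᵀ * (S⁻¹ * (Y * X) - 1 * X) * (S * Ξᵀ⁻¹) + Ξᵀ * (X * (S * Ξᵀ⁻¹)) by
          simp only [Matrix.sub_mul, Matrix.mul_sub, Matrix.one_mul, Matrix.mul_assoc]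
          noncomm_ring,
        show S⁻¹ * (Y * X) - 1 * X = S⁻¹ * (Y * X) - S⁻¹ * (S * X) by
          rw [Matrix.nonsing_inv_mul_cancel_left _ _ hSd, Matrix.one_mul],
        show S⁻¹ * (Y * X) - S⁻¹ * (S * X) = S⁻¹ * ((Y - S) * X) by
          simp only [Matrix.mul_sub, Matrix.sub_mul, Matrix.mul_assoc],
        show Y - S = X⁻¹ by rw [hS]; exact sub_sub_cancel _ _,
        Matrix.nonsing_inv_mul _ hXd]
      rw [show Ξᵀ * (S⁻¹ * 1) * (S * Ξᵀ⁻¹) = Ξᵀ * (S⁻¹ * (S * Ξᵀ⁻¹)) by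
          simp only [Matrix.mul_one, Matrix.mul_assoc],
        Matrix.nonsing_inv_mul_cancel_left _ _ hSd, Matrix.mul_nonsing_inv _ hΞtd]
      simp only [Matrix.mul_neg, Matrix.mul_assoc]
      abel
  -- invertibility of the block-triangular factors
  set L := Matrix.fromBlocks (1 : Matrix (Fin m) (Fin m) ℝ) 0 (Y * B₂) Ξ with hL
  set R := Matrix.fromBlocks (1 : Matrix (Fin p) (Fin p) ℝ) (C₂ * X) 0
      (-(Ξ⁻¹ * (Y - X⁻¹) * X)) with hR
  have hLd : IsUnit L.det := by
    rw [hL, Matrix.det_fromBlocks_zero₁₂, Matrix.det_one, one_mul]; exact hΞd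
  have hΞinv : IsUnit Ξ⁻¹ := Matrix.isUnit_nonsing_inv_iff.mpr hΞ
  have hRd : IsUnit R.det := by
    rw [hR, Matrix.det_fromBlocks_zero₂₁, Matrix.det_one, one_mul]
    exact Matrix.isUnit_iff_isUnit_det _ |>.mp (((hΞinv.mul hSpd.isUnit).mul hXpd.isUnit).neg)
  -- the key cancellation
  have hK : L * (PsiK A B₂ C₂ Λ X Y Ξ) * R = Λ - Matrix.fromBlocks 0 0 0 (Y * A * X) := by
    rw [PsiK, ← hL, ← hR, Matrix.mul_assoc L⁻¹, Matrix.mul_nonsing_inv_cancel_left _ _ hLd,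
      Matrix.nonsing_inv_mul_cancel_right _ _ hRd]
  have hΛ : Λ = L * (PsiK A B₂ C₂ Λ X Y Ξ) * R + Matrix.fromBlocks 0 0 0 (Y * A * X) := by
    rw [hK, sub_add_cancel]
  set K := PsiK A B₂ C₂ Λ X Y Ξ with hKdef
  conv_rhs => rw [hΛ]
  rw [← Matrix.fromBlocks_toBlocks K]
  set k11 := K.toBlocks₁₁
  set k12 := K.toBlocks₁₂
  set k21 := K.toBlocks₂₁
  set k22 := K.toBlocks₂₂
  rw [PhiLam, PhiM, hPinv, PsiP, hL, hR]
  simp only [Matrix.toBlocks_fromBlocks₁₁, Matrix.toBlocks_fromBlocks₁₂,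
    Matrix.toBlocks_fromBlocks₂₁, Matrix.toBlocks_fromBlocks₂₂,
    Matrix.fromBlocks_multiply, Matrix.fromBlocks_add]
  rw [Matrix.fromBlocks_inj]
  refine ⟨?_, ?_, ?_, ?_⟩ <;>
    · simp only [Matrix.one_mul, Matrix.zero_mul, Matrix.mul_one, Matrix.mul_zero,
        add_zero, zero_add, Matrix.add_mul, Matrix.mul_add, Matrix.mul_assoc]
      try abel
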